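/- If P ⊆ ℝ^n is an L₂♮-convex polyhedron, then there exist values γ_{I,J} ∈ ℝ ∪ {+∞}, indexed by pairs of disjoint subsets I, J of N = {1,…,n} with |I| − |J| ∈ {−1, 0, 1}, such that P = {x ∈ ℝ^n : x(J) − x(I) ≤ γ_{I,J} for all disjoint I, J ⊆ N with |I| − |J| ∈ {−1, 0, 1}}. -/

import Mathlib

open Pointwise

/-- A polyhedron in `ℝⁿ` is the solution set of a finite system of linear
inequalities. -/
def IsPolyhedron {n : ℕ} (P : Set (Fin n → ℝ)) : Prop :=
  ∃ (m : ℕ) (A : Fin m → Fin n → ℝ) (b : Fin m → ℝ),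
    P = {x | ∀ i, ∑ j, A i j * x j ≤ b i}

/-- A nonempty polyhedron `P ⊆ ℝⁿ` is L-convex if it is closed under
componentwise max/min and under translation by real multiples of `𝟏`. -/
def IsLConvexPoly {n : ℕ} (P : Set (Fin n → ℝ)) : Prop :=
  IsPolyhedron P ∧ P.Nonempty ∧
  (∀ x ∈ P, ∀ y ∈ P, x ⊔ y ∈ P ∧ x ⊓ y ∈ P) ∧
  (∀ x ∈ P, ∀ μ : ℝ, (x + fun _ => μ) ∈ P)

/-- A polyhedron `P ⊆ ℝⁿ` is L♮-convex if it is the intersection of an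
L-convex polyhedron `Q ⊆ ℝ^{n+1}` with the hyperplane "last coordinate 0". -/
def IsLNatConvexPoly {n : ℕ} (P : Set (Fin n → ℝ)) : Prop :=
  IsPolyhedron P ∧
  ∃ Q : Set (Fin (n + 1) → ℝ), IsLConvexPoly Q ∧
    P = {x : Fin n → ℝ | Fin.snoc x (0 : ℝ) ∈ Q}

/-- A polyhedron is L₂♮-convex if it is the Minkowski sum of two L♮-convex
polyhedra. -/
def IsL2NatConvexPoly {n : ℕ} (P : Set (Fin n → ℝ)) : Prop :=
  IsPolyhedron P ∧
  ∃ P₁ P₂ : Set (Fin n → ℝ), IsLNatConvexPoly P₁ ∧ IsLNatConvexPoly P₂ ∧ P = P₁ + P₂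

namespace L2Aux

noncomputable def mysup (S : Set ℝ) : WithTop ℝ :=
  open scoped Classical in if BddAbove S then ((sSup S : ℝ) : WithTop ℝ) else ⊤

lemma le_mysup {S : Set ℝ} {a : ℝ} (ha : a ∈ S) : (a : WithTop ℝ) ≤ mysup S := by
  unfold mysup
  split_ifs with h
  · exact_mod_cast le_csSup h ha
  · exact le_top

lemma mysup_le {S : Set ℝ} {c : ℝ} (hne : S.Nonempty) (h : ∀ a ∈ S, a ≤ c) :
    mysup S ≤ (c : WithTop ℝ) := by
  unfold mysup
  split_ifs with hb
  · exact_mod_cast csSup_le hne h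
  · exact absurd ⟨c, fun a ha => h a ha⟩ hb

lemma exists_near_mysup {S : Set ℝ} {a : ℝ} (hne : S.Nonempty)
    (h : (a : WithTop ℝ) ≤ mysup S) (ε : ℝ) (hε : 0 < ε) : ∃ b ∈ S, a - ε < b := by
  by_contra hc
  push_neg at hc
  have := mysup_le hne hc
  have h2 : (a : WithTop ℝ) ≤ ((a - ε : ℝ) : WithTop ℝ) := le_trans h this
  have : a ≤ a - ε := by exact_mod_cast h2
  linarith

lemma isClosed_of_isPolyhedron {n : ℕ} {P : Set (Fin n → ℝ)} (h : IsPolyhedron P) :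
    IsClosed P := by
  obtain ⟨m, A, b, rfl⟩ := h
  have : {x : Fin n → ℝ | ∀ i, ∑ j, A i j * x j ≤ b i}
      = ⋂ i, {x | ∑ j, A i j * x j ≤ b i} := by ext x; simp [Set.mem_iInter]
  rw [this]
  refine isClosed_iInter fun i => isClosed_le ?_ continuous_const
  exact continuous_finset_sum _ fun j _ => (continuous_const.mul (continuous_apply j) : Continuous fun x : Fin n → ℝ => A i j * x j)

variable {m : ℕ}

lemma sup'_mem {Q : Set (Fin m → ℝ)} (hQ : ∀ x ∈ Q, ∀ y ∈ Q, x ⊔ y ∈ Q)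
    {ι : Type*} (s : Finset ι) (hs : s.Nonempty) (f : ι → Fin m → ℝ)
    (hf : ∀ i ∈ s, f i ∈ Q) : s.sup' hs f ∈ Q :=
  Finset.sup'_induction hs f (fun a ha b hb => hQ a ha b hb) hf

lemma inf'_mem {Q : Set (Fin m → ℝ)} (hQ : ∀ x ∈ Q, ∀ y ∈ Q, x ⊓ y ∈ Q)
    {ι : Type*} (s : Finset ι) (hs : s.Nonempty) (f : ι → Fin m → ℝ)
    (hf : ∀ i ∈ s, f i ∈ Q) : s.inf' hs f ∈ Q :=
  Finset.inf'_induction hs f (fun a ha b hb => hQ a ha b hb) hf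

/-- difference bound of a set -/
noncomputable def dg (Q : Set (Fin m → ℝ)) (i j : Fin m) : WithTop ℝ :=
  mysup {r | ∃ q ∈ Q, r = q j - q i}

/-- Lemma A : an L-convex polyhedron equals its difference-bound description. -/
lemma lconvex_eq_diff {n : ℕ} {Q : Set (Fin (n+1) → ℝ)} (hQ : IsLConvexPoly Q) :
    Q = {q | ∀ i j, ((q j - q i : ℝ) : WithTop ℝ) ≤ dg Q i j} := by
  obtain ⟨hpoly, hne, hlat, htrans⟩ := hQ
  apply Set.Subset.antisymm
  · intro q hq i j
    exact le_mysup ⟨q, hq, rfl⟩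
  · intro q hq
    have hclosed : IsClosed Q := isClosed_of_isPolyhedron hpoly
    rw [← hclosed.closure_eq]
    rw [Metric.mem_closure_iff]
    intro ε hε
    have hε2 : 0 < ε / 2 := by linarith
    -- for each pair (i,j) pick p ∈ Q with q i - q j - ε/2 < p i - p j
    have hpick : ∀ i j : Fin (n+1), ∃ p ∈ Q, q i - q j - ε / 2 < p i - p j := by
      intro i j
      have h1 := hq j i
      have hSne : {r | ∃ p ∈ Q, r = p i - p j}.Nonempty := by
        obtain ⟨p, hp⟩ := hne; exact ⟨p i - p j, p, hp, rfl⟩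
      obtain ⟨b, ⟨p, hp, rfl⟩, hb⟩ := exists_near_mysup hSne h1 (ε/2) hε2
      exact ⟨p, hp, hb⟩
    choose p hpQ hpv using hpick
    -- r i j ∈ Q with (r i j) i = q i and (r i j) j < q j + ε/2
    set r : Fin (n+1) → Fin (n+1) → (Fin (n+1) → ℝ) :=
      fun i j => p i j + fun _ => q i - p i j i with hr
    have hrQ : ∀ i j, r i j ∈ Q := fun i j => htrans _ (hpQ i j) _
    have hri : ∀ i j, r i j i = q i := by intro i j; simp [hr]
    have hrj : ∀ i j, r i j j < q j + ε / 2 := by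
      intro i j
      have := hpv i j
      simp only [hr, Pi.add_apply]
      linarith
    -- s i := inf over j of r i j
    set s : Fin (n+1) → (Fin (n+1) → ℝ) :=
      fun i => Finset.univ.inf' Finset.univ_nonempty (r i) with hs
    have hsQ : ∀ i, s i ∈ Q :=
      fun i => inf'_mem (fun x hx y hy => (hlat x hx y hy).2) _ _ _ (fun j _ => hrQ i j)
    have hsi : ∀ i, s i i = q i := by
      intro i
      have : s i i = Finset.univ.inf' Finset.univ_nonempty (fun j => r i j i) := by
        simp [hs, Finset.inf'_apply]
      rw [this]
      simp [hri]
    have hsj : ∀ i j, s i j < q j + ε / 2 := by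
      intro i j
      have h1 : s i j ≤ r i j j := by
        have : s i j = Finset.univ.inf' Finset.univ_nonempty (fun k => r i k j) := by
          simp [hs, Finset.inf'_apply]
        rw [this]
        exact Finset.inf'_le _ (Finset.mem_univ j)
      exact lt_of_le_of_lt h1 (hrj i j)
    -- final point
    set pf : Fin (n+1) → ℝ := Finset.univ.sup' Finset.univ_nonempty s with hpf
    have hpfQ : pf ∈ Q :=
      sup'_mem (fun x hx y hy => (hlat x hx y hy).1) _ _ _ (fun i _ => hsQ i)
    have hpf_app : ∀ v, pf v = Finset.univ.sup' Finset.univ_nonempty (fun i => s i v) := by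
      intro v; simp [hpf, Finset.sup'_apply]
    have hlow : ∀ v, q v ≤ pf v := by
      intro v; rw [hpf_app]
      calc q v = s v v := (hsi v).symm
      _ ≤ _ := Finset.le_sup' (fun i => s i v) (Finset.mem_univ v)
    have hhigh : ∀ v, pf v < q v + ε / 2 := by
      intro v; rw [hpf_app]
      apply (Finset.sup'_lt_iff _).mpr
      intro i _
      exact hsj i v
    refine ⟨pf, hpfQ, ?_⟩
    have : dist q pf ≤ ε / 2 := by
      rw [dist_pi_le_iff (le_of_lt hε2)]
      intro v
      rw [Real.dist_eq, abs_le]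
      have h1 := hlow v; have h2 := hhigh v
      exact ⟨by linarith, by linarith⟩
    linarith

variable {α : Type*}

/-- path weight of a list of vertices -/
def pw (w : α → α → WithTop ℝ) : List α → WithTop ℝ
  | a :: b :: t => w a b + pw w (b :: t)
  | _ => 0

@[simp] lemma pw_nil (w : α → α → WithTop ℝ) : pw w [] = 0 := rfl
@[simp] lemma pw_single (w : α → α → WithTop ℝ) (a : α) : pw w [a] = 0 := rfl
@[simp] lemma pw_cons_cons (w : α → α → WithTop ℝ) (a b : α) (t : List α) :
    pw w (a :: b :: t) = w a b + pw w (b :: t) := rfl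

lemma pw_append (w : α → α → WithTop ℝ) (l₁ : List α) (a : α) (l₂ : List α) :
    pw w (l₁ ++ a :: l₂) = pw w (l₁ ++ [a]) + pw w (a :: l₂) := by
  induction l₁ with
  | nil => simp
  | cons x t ih =>
    cases t with
    | nil => simp [add_assoc]
    | cons y t' =>
      simp only [List.cons_append, pw_cons_cons] at ih ⊢
      rw [ih, add_assoc]

/-- closed-walk weight from `a` through `l` back to `a` -/
def cw (w : α → α → WithTop ℝ) (a : α) (l : List α) : WithTop ℝ :=
  pw w (a :: (l ++ [a]))

lemma exists_dup_split {l : List α} (h : ¬ l.Nodup) :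
    ∃ (x : α) (l₁ l₂ l₃ : List α), l = l₁ ++ x :: l₂ ++ x :: l₃ := by
  induction l with
  | nil => exact absurd List.nodup_nil h
  | cons a t ih =>
    by_cases ha : a ∈ t
    · obtain ⟨s, t', rfl⟩ := List.append_of_mem ha
      exact ⟨a, [], s, t', by simp⟩
    · have : ¬ t.Nodup := fun hn => h (List.nodup_cons.mpr ⟨ha, hn⟩)
      obtain ⟨x, l₁, l₂, l₃, rfl⟩ := ih this
      exact ⟨x, a :: l₁, l₂, l₃, by simp⟩

lemma cycles_nonneg_of_nodup (w : α → α → WithTop ℝ)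
    (H : ∀ a l, (a :: l).Nodup → 0 ≤ cw w a l) :
    ∀ (N : ℕ) (a : α) (l : List α), l.length ≤ N → 0 ≤ cw w a l := by
  intro N
  induction N with
  | zero =>
    intro a l hl
    have : l = [] := List.length_eq_zero_iff.mp (Nat.le_zero.mp hl)
    subst this
    exact H a [] (List.nodup_cons.mpr ⟨List.not_mem_nil, List.nodup_nil⟩)
  | succ N ih =>
    intro a l hl
    by_cases hnd : (a :: l).Nodup
    · exact H a l hnd
    · obtain ⟨x, l₁, l₂, l₃, hsplit⟩ := exists_dup_split hnd
      cases l₁ with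
      | nil =>
        simp only [List.nil_append, List.cons.injEq] at hsplit
        obtain ⟨rfl, rfl⟩ := hsplit
        have hlen : l₂.length ≤ N ∧ l₃.length ≤ N := by
          constructor <;> (simp at hl; omega)
        have e1 : cw w a (l₂ ++ a :: l₃) = cw w a l₂ + cw w a l₃ := by
          unfold cw
          have h0 : a :: ((l₂ ++ a :: l₃) ++ [a]) = (a :: l₂) ++ a :: (l₃ ++ [a]) := by simp
          rw [h0, pw_append w (a :: l₂) a (l₃ ++ [a])]
          rfl
        show 0 ≤ cw w a (l₂ ++ a :: l₃)
        rw [e1]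
        exact add_nonneg (ih a l₂ hlen.1) (ih a l₃ hlen.2)
      | cons b l₁' =>
        simp only [List.cons_append, List.cons.injEq] at hsplit
        obtain ⟨rfl, rfl⟩ := hsplit
        have hlen : l₂.length ≤ N ∧ (l₁' ++ x :: l₃).length ≤ N := by
          constructor <;> (simp at hl ⊢; omega)
        have e1 : cw w a (l₁' ++ x :: l₂ ++ x :: l₃)
            = cw w x l₂ + cw w a (l₁' ++ x :: l₃) := by
          unfold cw
          have h1 : a :: ((l₁' ++ x :: l₂ ++ x :: l₃) ++ [a])
              = (a :: l₁') ++ x :: (l₂ ++ x :: (l₃ ++ [a])) := by simp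
          rw [h1, pw_append w (a :: l₁') x (l₂ ++ x :: (l₃ ++ [a]))]
          have h2 : x :: (l₂ ++ x :: (l₃ ++ [a])) = (x :: l₂) ++ x :: (l₃ ++ [a]) := by simp
          rw [h2, pw_append w (x :: l₂) x (l₃ ++ [a])]
          have h3 : a :: ((l₁' ++ x :: l₃) ++ [a]) = (a :: l₁') ++ x :: (l₃ ++ [a]) := by simp
          rw [h3, pw_append w (a :: l₁') x (l₃ ++ [a])]
          show pw w (a :: l₁' ++ [x]) + (pw w (x :: (l₂ ++ [x])) + pw w (x :: (l₃ ++ [a])))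
              = pw w (x :: (l₂ ++ [x])) + (pw w (a :: l₁' ++ [x]) + pw w (x :: (l₃ ++ [a])))
          abel
        rw [e1]
        exact add_nonneg (ih x l₂ hlen.1) (ih a _ hlen.2)

lemma solution_pw {w : α → α → WithTop ℝ} {u : α → ℝ}
    (hu : ∀ i j, ((u j - u i : ℝ) : WithTop ℝ) ≤ w i j) :
    ∀ (l : List α) (a : α),
      ((u ((a :: l).getLast (List.cons_ne_nil a l)) - u a : ℝ) : WithTop ℝ) ≤ pw w (a :: l) := by
  intro l
  induction l with
  | nil => intro a; simp
  | cons b t ih =>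
    intro a
    have h1 : (a :: b :: t).getLast (List.cons_ne_nil _ _)
        = (b :: t).getLast (List.cons_ne_nil _ _) := by
      simp [List.getLast]
    rw [h1, pw_cons_cons]
    calc ((u ((b :: t).getLast (List.cons_ne_nil b t)) - u a : ℝ) : WithTop ℝ)
        = ((u b - u a : ℝ) : WithTop ℝ)
          + ((u ((b :: t).getLast (List.cons_ne_nil b t)) - u b : ℝ) : WithTop ℝ) := by
          rw [← WithTop.coe_add]; norm_num
      _ ≤ w a b + pw w (b :: t) := add_le_add (hu a b) (ih b)

lemma solution_cw {w : α → α → WithTop ℝ} {u : α → ℝ}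
    (hu : ∀ i j, ((u j - u i : ℝ) : WithTop ℝ) ≤ w i j) (a : α) (l : List α) :
    0 ≤ cw w a l := by
  have := solution_pw hu (l ++ [a]) a
  have hl : ((a :: (l ++ [a])).getLast (List.cons_ne_nil _ _)) = a := by
    rw [List.getLast_cons (by simp)]
    exact List.getLast_append _
  rw [hl] at this
  simpa [cw] using this

-- ==== new material ====
variable {m : ℕ}

noncomputable def BF (w : Fin (m+1) → Fin (m+1) → WithTop ℝ) : ℕ → Fin (m+1) → WithTop ℝ
  | 0, _ => 0
  | k+1, j => min (BF w k j) (Finset.univ.inf fun i => BF w k i + w i j)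

@[simp] lemma BF_zero (w : Fin (m+1) → Fin (m+1) → WithTop ℝ) (j : Fin (m+1)) :
    BF w 0 j = 0 := rfl
lemma BF_succ (w : Fin (m+1) → Fin (m+1) → WithTop ℝ) (k : ℕ) (j : Fin (m+1)) :
    BF w (k+1) j = min (BF w k j) (Finset.univ.inf fun i => BF w k i + w i j) := rfl

lemma BF_le_zero (w : Fin (m+1) → Fin (m+1) → WithTop ℝ) (k : ℕ) (j : Fin (m+1)) :
    BF w k j ≤ 0 := by
  induction k with
  | zero => exact le_refl _
  | succ k ih => exact le_trans (min_le_left _ _) ih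

lemma BF_min (w : Fin (m+1) → Fin (m+1) → WithTop ℝ) :
    ∀ (k : ℕ) (j : Fin (m+1)) (l : List (Fin (m+1))), l.length ≤ k →
      BF w k j ≤ pw w (l ++ [j]) := by
  intro k
  induction k with
  | zero =>
    intro j l hl
    have : l = [] := List.length_eq_zero_iff.mp (Nat.le_zero.mp hl)
    subst this; simp [BF_zero]
  | succ k ih =>
    intro j l hl
    rcases List.eq_nil_or_concat l with rfl | ⟨l', b, rfl⟩
    all_goals try simp only [List.concat_eq_append] at hl ⊢
    · simpa using BF_le_zero w (k+1) j

    · have hlen : l'.length ≤ k := by simp at hl; omega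
      have h1 : pw w ((l' ++ [b]) ++ [j]) = pw w (l' ++ [b]) + w b j := by
        have : (l' ++ [b]) ++ [j] = l' ++ b :: [j] := by simp
        rw [this, pw_append w l' b [j]]
        simp
      rw [h1]
      calc BF w (k+1) j ≤ Finset.univ.inf (fun i => BF w k i + w i j) := min_le_right _ _
        _ ≤ BF w k b + w b j := Finset.inf_le (Finset.mem_univ b)
        _ ≤ pw w (l' ++ [b]) + w b j := add_le_add (ih b l' hlen) le_rfl

lemma BF_achieve (w : Fin (m+1) → Fin (m+1) → WithTop ℝ) :
    ∀ (k : ℕ) (j : Fin (m+1)), ∃ l : List (Fin (m+1)),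
      l.length ≤ k ∧ pw w (l ++ [j]) ≤ BF w k j := by
  intro k
  induction k with
  | zero => intro j; exact ⟨[], by simp, by simp [BF_zero]⟩
  | succ k ih =>
    intro j
    rw [BF_succ] at *
    rcases le_total (BF w k j) (Finset.univ.inf fun i => BF w k i + w i j) with h | h
    · obtain ⟨l, hl, hle⟩ := ih j
      exact ⟨l, le_trans hl (Nat.le_succ k), by
        show pw w (l ++ [j]) ≤ min _ _
        rw [min_eq_left h]; exact hle⟩
    · obtain ⟨b, _, hb⟩ := Finset.exists_mem_eq_inf Finset.univ Finset.univ_nonempty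
        (fun i => BF w k i + w i j)
      obtain ⟨l, hl, hle⟩ := ih b
      refine ⟨l ++ [b], by simp; omega, ?_⟩
      show pw w ((l ++ [b]) ++ [j]) ≤ min _ _
      rw [min_eq_right h, hb]
      have h1 : (l ++ [b]) ++ [j] = l ++ b :: [j] := by simp
      rw [h1, pw_append w l b [j]]
      simpa using add_le_add hle (le_refl (w b j))

lemma pw_shorten (w : Fin (m+1) → Fin (m+1) → WithTop ℝ)
    (H : ∀ a l, 0 ≤ cw w a l) :
    ∀ (N : ℕ) (l : List (Fin (m+1))) (j : Fin (m+1)), l.length ≤ N →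
      ∃ l', l'.length ≤ m + 1 ∧ pw w (l' ++ [j]) ≤ pw w (l ++ [j]) := by
  intro N
  induction N with
  | zero => intro l j hl; exact ⟨l, by omega, le_refl _⟩
  | succ N ih =>
    intro l j hl
    by_cases hsh : l.length ≤ m + 1
    · exact ⟨l, hsh, le_refl _⟩
    · have hnd : ¬ l.Nodup := by
        intro hnd
        have := hnd.length_le_card
        simp [Fintype.card_fin] at this
        omega
      obtain ⟨x, l₁, l₂, l₃, rfl⟩ := exists_dup_split hnd
      have key : pw w ((l₁ ++ x :: l₃) ++ [j]) ≤ pw w ((l₁ ++ x :: l₂ ++ x :: l₃) ++ [j]) := by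
        have e1 : (l₁ ++ x :: l₂ ++ x :: l₃) ++ [j]
            = l₁ ++ x :: (l₂ ++ x :: (l₃ ++ [j])) := by simp
        rw [e1, pw_append w l₁ x (l₂ ++ x :: (l₃ ++ [j]))]
        have e2 : x :: (l₂ ++ x :: (l₃ ++ [j])) = (x :: l₂) ++ x :: (l₃ ++ [j]) := by simp
        rw [e2, pw_append w (x :: l₂) x (l₃ ++ [j])]
        have e3 : (l₁ ++ x :: l₃) ++ [j] = l₁ ++ x :: (l₃ ++ [j]) := by simp
        rw [e3, pw_append w l₁ x (l₃ ++ [j])]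
        have h0 : 0 ≤ pw w ((x :: l₂) ++ [x]) := H x l₂
        calc pw w (l₁ ++ [x]) + pw w (x :: (l₃ ++ [j]))
            = pw w (l₁ ++ [x]) + (0 + pw w (x :: (l₃ ++ [j]))) := by rw [zero_add]
          _ ≤ pw w (l₁ ++ [x]) + (pw w ((x :: l₂) ++ [x]) + pw w (x :: (l₃ ++ [j]))) := by
              exact add_le_add le_rfl (add_le_add h0 le_rfl)
      have hlen : (l₁ ++ x :: l₃).length ≤ N := by simp at hl ⊢; omega
      obtain ⟨l', hl', hle⟩ := ih (l₁ ++ x :: l₃) j hlen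
      exact ⟨l', hl', le_trans hle key⟩

/-- Feasibility of a difference constraint system from nonnegativity of simple cycles. -/
lemma feasible_of_cycles_nonneg (w : Fin (m+1) → Fin (m+1) → WithTop ℝ)
    (H : ∀ a l, (a :: l).Nodup → 0 ≤ cw w a l) :
    ∃ u : Fin (m+1) → ℝ, ∀ i j, ((u j - u i : ℝ) : WithTop ℝ) ≤ w i j := by
  have Hall : ∀ a l, 0 ≤ cw w a l :=
    fun a l => cycles_nonneg_of_nodup w H l.length a l (le_refl _)
  have hstab : ∀ j, BF w (m+1) j ≤ BF w (m+1+1) j := by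
    intro j
    obtain ⟨l, hl, hle⟩ := BF_achieve w (m+1+1) j
    obtain ⟨l', hl', hle'⟩ := pw_shorten w Hall l.length l j (le_refl _)
    exact le_trans (le_trans (BF_min w (m+1) j l' hl') hle') hle
  have hne : ∀ j, BF w (m+1) j ≠ ⊤ :=
    fun j => ne_top_of_le_ne_top (by simp) (BF_le_zero w (m+1) j)
  refine ⟨fun j => (BF w (m+1) j).untop (hne j), fun i j => ?_⟩
  have h1 : BF w (m+1) j ≤ BF w (m+1) i + w i j := by
    calc BF w (m+1) j ≤ BF w (m+1+1) j := hstab j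
      _ ≤ Finset.univ.inf (fun i => BF w (m+1) i + w i j) := by
          rw [BF_succ]; exact min_le_right _ _
      _ ≤ BF w (m+1) i + w i j := Finset.inf_le (Finset.mem_univ i)
  rcases eq_or_ne (w i j) ⊤ with htop | htop
  · rw [htop]; exact le_top
  · obtain ⟨r, hr⟩ := WithTop.ne_top_iff_exists.mp htop
    rw [← hr] at h1 ⊢
    rw [← WithTop.coe_untop _ (hne j), ← WithTop.coe_untop _ (hne i), ← WithTop.coe_add,
      WithTop.coe_le_coe] at h1
    rw [WithTop.coe_le_coe]
    linarith

-- ==== new ====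

/-- pw with explicit per-edge choice between two weight families -/
def pwc (w₁ w₂ : α → α → WithTop ℝ) : List Bool → List α → WithTop ℝ
  | c :: cs, a :: b :: t => (if c then w₁ a b else w₂ a b) + pwc w₁ w₂ cs (b :: t)
  | _, _ => 0

@[simp] lemma pwc_cons_cons (w₁ w₂ : α → α → WithTop ℝ) (c : Bool) (cs : List Bool)
    (a b : α) (t : List α) :
    pwc w₁ w₂ (c :: cs) (a :: b :: t)
      = (if c then w₁ a b else w₂ a b) + pwc w₁ w₂ cs (b :: t) := rfl

lemma exists_pwc (w₁ w₂ : α → α → WithTop ℝ) (L : List α) :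
    ∃ cs : List Bool, L.length ≤ cs.length + 1 ∧
      pwc w₁ w₂ cs L = pw (fun a b => min (w₁ a b) (w₂ a b)) L := by
  induction L with
  | nil => exact ⟨[], by simp, rfl⟩
  | cons a t ih =>
    cases t with
    | nil => exact ⟨[], by simp, rfl⟩
    | cons b t' =>
      obtain ⟨cs, hlen, hcs⟩ := (by exact ih : ∃ cs, (b :: t').length ≤ cs.length + 1 ∧
        pwc w₁ w₂ cs (b :: t')
        = pw (fun a b => min (w₁ a b) (w₂ a b)) (b :: t'))
      rcases le_total (w₁ a b) (w₂ a b) with h | h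
      · exact ⟨true :: cs, by simp at hlen ⊢; omega, by simp [hcs, min_eq_left h]⟩
      · exact ⟨false :: cs, by simp at hlen ⊢; omega, by simp [hcs, min_eq_right h]⟩

/-- heads of type-2 (false) edges -/
def htH : List Bool → List α → Multiset α
  | c :: cs, a :: b :: t => (if c then 0 else {b}) + htH cs (b :: t)
  | _, _ => 0

/-- tails of type-2 (false) edges -/
def htT : List Bool → List α → Multiset α
  | c :: cs, a :: b :: t => (if c then 0 else {a}) + htT cs (b :: t)
  | _, _ => 0

lemma htH_card_eq_htT_card (cs : List Bool) (L : List α) :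
    Multiset.card (htH cs L) = Multiset.card (htT cs L) := by
  induction cs generalizing L with
  | nil => cases L <;> rfl
  | cons c cs ih =>
    match L with
    | [] => rfl
    | [a] => rfl
    | a :: b :: t => simp only [htH, htT, Multiset.card_add, ih (b :: t)]; cases c <;> simp

lemma htH_le (cs : List Bool) (a : α) (t : List α) :
    htH cs (a :: t) ≤ (t : Multiset α) := by
  induction cs generalizing a t with
  | nil => cases t <;> simp [htH]
  | cons c cs ih =>
    match t with
    | [] => simp [htH]
    | b :: t' =>
      show (if c then 0 else {b}) + htH cs (b :: t') ≤ (b ::ₘ (t' : Multiset α))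
      have := ih b t'
      cases c
      · simpa using Multiset.cons_le_cons b this
      · simpa using le_trans (Multiset.le_cons_self _ b) (Multiset.cons_le_cons b this)

lemma htT_le (cs : List Bool) (L : List α) :
    htT cs L ≤ (L.dropLast : Multiset α) := by
  induction cs generalizing L with
  | nil => cases L <;> simp [htT]
  | cons c cs ih =>
    match L with
    | [] => simp [htT]
    | [a] => simp [htT]
    | a :: b :: t =>
      show (if c then 0 else {a}) + htT cs (b :: t) ≤ ((a :: b :: t).dropLast : Multiset α)
      have hd : (a :: b :: t).dropLast = a :: (b :: t).dropLast := by
        simp [List.dropLast_cons₂]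
      rw [hd]
      have := ih (b :: t)
      cases c
      · simpa using Multiset.cons_le_cons a this
      · simpa using le_trans this (Multiset.le_cons_self _ a)

lemma addtop (c : WithTop ℝ) (p q : ℝ) :
    c + ((p : ℝ) : WithTop ℝ) = c + ((q : ℝ) : WithTop ℝ) + (((p - q : ℝ)) : WithTop ℝ) := by
  induction c
  · simp
  · rw [← WithTop.coe_add, ← WithTop.coe_add, ← WithTop.coe_add, WithTop.coe_eq_coe]
    ring

/-- the `z`-dependent part of a chosen walk weight -/
noncomputable def Ssum (z : α → ℝ) (cs : List Bool) (L : List α) : ℝ :=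
  ((htH cs L).map z).sum - ((htT cs L).map z).sum

/-- Key evaluation: changing `z` in type-2 weights shifts `pwc` by the `Ssum` difference. -/
lemma pwc_shift (g₂ : α → α → WithTop ℝ) (z z' : α → ℝ) (cs : List Bool) (L : List α)
    (w₁ : α → α → WithTop ℝ) :
    pwc w₁ (fun a b => g₂ b a + ((z' b - z' a : ℝ) : WithTop ℝ)) cs L
      = pwc w₁ (fun a b => g₂ b a + ((z b - z a : ℝ) : WithTop ℝ)) cs L
        + ((Ssum z' cs L - Ssum z cs L : ℝ) : WithTop ℝ) := by
  induction cs generalizing L with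
  | nil => match L with
    | [] => simp [pwc, Ssum, htH, htT]
    | [a] => simp [pwc, Ssum, htH, htT]
    | a :: b :: t => simp [pwc, Ssum, htH, htT]
  | cons c cs ih =>
    match L with
    | [] => simp [pwc, Ssum, htH, htT]
    | [a] => simp [pwc, Ssum, htH, htT]
    | a :: b :: t =>
      have hSd : Ssum z' (c :: cs) (a :: b :: t) - Ssum z (c :: cs) (a :: b :: t)
          = (if c then 0 else (z' b - z' a) - (z b - z a))
            + (Ssum z' cs (b :: t) - Ssum z cs (b :: t)) := by
        cases c <;> (simp [Ssum, htH, htT]; try ring)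
      rw [pwc_cons_cons, pwc_cons_cons, ih (b :: t), hSd]
      cases c
      · simp only [Bool.false_eq_true, if_false]
        rw [addtop (g₂ b a) (z' b - z' a) (z b - z a), WithTop.coe_add]
        abel
      · simp only [if_true]
        rw [WithTop.coe_add]
        simp only [WithTop.coe_zero]
        abel

-- ==== new ====

lemma pw_min_le_pwc (w₁ w₂ : α → α → WithTop ℝ) (cs : List Bool) (L : List α)
    (hlen : L.length ≤ cs.length + 1) :
    pw (fun a b => min (w₁ a b) (w₂ a b)) L ≤ pwc w₁ w₂ cs L := by
  induction cs generalizing L with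
  | nil =>
    match L with
    | [] => exact le_refl _
    | [a] => exact le_refl _
    | a :: b :: t => simp at hlen
  | cons c cs ih =>
    match L with
    | [] => exact le_refl _
    | [a] => exact le_refl _
    | a :: b :: t =>
      show min (w₁ a b) (w₂ a b) + pw _ (b :: t) ≤ (if c then w₁ a b else w₂ a b) + _
      apply add_le_add ?_ (ih (b :: t) (by simp at hlen ⊢; omega))
      cases c
      · exact min_le_right _ _
      · exact min_le_left _ _

lemma decomp [DecidableEq α] (cs : List Bool) (a : α) (l : List α) (hnd : (a :: l).Nodup) :
    ∃ Hf Tf : Finset α, Disjoint Hf Tf ∧ Hf.card = Tf.card ∧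
      ∀ z : α → ℝ, Ssum z cs (a :: (l ++ [a])) = (∑ v ∈ Hf, z v) - (∑ v ∈ Tf, z v) := by
  obtain ⟨hal, hl⟩ := List.nodup_cons.mp hnd
  have hndH : (htH cs (a :: (l ++ [a]))).Nodup := by
    refine Multiset.nodup_of_le (htH_le cs a (l ++ [a])) ?_
    rw [Multiset.coe_nodup, List.nodup_append]
    refine ⟨hl, List.nodup_singleton a, ?_⟩
    intro x hx b hb hxb
    rw [List.mem_singleton] at hb
    subst hb; subst hxb
    exact hal hx
  have hndT : (htT cs (a :: (l ++ [a]))).Nodup := by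
    have hdl : (a :: (l ++ [a])).dropLast = a :: l := by
      rw [List.dropLast_cons_of_ne_nil (by simp), List.dropLast_concat]
    have h1 : htT cs (a :: (l ++ [a])) ≤ ((a :: l : List α) : Multiset α) := by
      have := htT_le cs (a :: (l ++ [a]))
      rwa [hdl] at this
    exact Multiset.nodup_of_le h1 (by rw [Multiset.coe_nodup]; exact hnd)
  set H0 : Finset α := ⟨htH cs (a :: (l ++ [a])), hndH⟩ with hH0
  set T0 : Finset α := ⟨htT cs (a :: (l ++ [a])), hndT⟩ with hT0
  refine ⟨H0 \ T0, T0 \ H0, disjoint_sdiff_sdiff, ?_, ?_⟩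
  · have h1 : (H0 \ T0).card + (H0 ∩ T0).card = H0.card := by
      rw [Finset.card_sdiff_add_card_inter]
    have h2 : (T0 \ H0).card + (T0 ∩ H0).card = T0.card := by
      rw [Finset.card_sdiff_add_card_inter]
    have h3 : H0.card = T0.card := htH_card_eq_htT_card cs _
    have h4 : (H0 ∩ T0).card = (T0 ∩ H0).card := by rw [Finset.inter_comm]
    omega
  · intro z
    have hsH : ∑ v ∈ H0, z v = ((htH cs (a :: (l ++ [a]))).map z).sum :=
      rfl
    have hsT : ∑ v ∈ T0, z v = ((htT cs (a :: (l ++ [a]))).map z).sum :=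
      rfl
    have e1 : ∑ v ∈ H0 \ (H0 ∩ T0), z v + ∑ v ∈ H0 ∩ T0, z v = ∑ v ∈ H0, z v :=
      Finset.sum_sdiff Finset.inter_subset_left
    have e2 : ∑ v ∈ T0 \ (T0 ∩ H0), z v + ∑ v ∈ T0 ∩ H0, z v = ∑ v ∈ T0, z v :=
      Finset.sum_sdiff Finset.inter_subset_left
    rw [Finset.sdiff_inter_self_left] at e1 e2
    have e3 : ∑ v ∈ H0 ∩ T0, z v = ∑ v ∈ T0 ∩ H0, z v := by rw [Finset.inter_comm]
    unfold Ssum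
    rw [← hsH, ← hsT, ← e1, ← e2, e3]
    ring

lemma downshift {n : ℕ} (A : Finset (Fin (n+1))) :
    ∃ A' : Finset (Fin n),
      (∀ z : Fin (n+1) → ℝ, z (Fin.last n) = 0 →
        ∑ j ∈ A', z (Fin.castSucc j) = ∑ v ∈ A, z v) ∧
      (A'.card : ℤ) = (A.card : ℤ) - (if Fin.last n ∈ A then 1 else 0) ∧
      (∀ j : Fin n, j ∈ A' ↔ Fin.castSucc j ∈ A) := by
  classical
  refine ⟨A.preimage Fin.castSucc (Fin.castSucc_injective n).injOn, ?_, ?_,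
    fun j => Finset.mem_preimage⟩
  · intro z hz
    refine Finset.sum_preimage Fin.castSucc A _ z ?_
    intro v hv hr
    rcases Fin.eq_castSucc_or_eq_last v with ⟨j, rfl⟩ | rfl
    · exact absurd ⟨j, rfl⟩ hr
    · exact hz
  · have hcard : (A.preimage Fin.castSucc (Fin.castSucc_injective n).injOn).card
        = ∑ v ∈ A, (if v = Fin.last n then 0 else 1) := by
      rw [← Finset.sum_preimage Fin.castSucc A (Fin.castSucc_injective n).injOn (fun v => if v = Fin.last n then 0 else 1) ?hg]
      · rw [Finset.card_eq_sum_ones]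
        refine Finset.sum_congr rfl fun j _ => ?_
        rw [if_neg (Fin.castSucc_lt_last j).ne]
      · intro v hv hr
        rcases Fin.eq_castSucc_or_eq_last v with ⟨j, rfl⟩ | rfl
        · exact absurd ⟨j, rfl⟩ hr
        · simp
    rw [hcard]
    by_cases hlast : Fin.last n ∈ A
    · rw [← Finset.add_sum_erase _ _ hlast, if_pos rfl, zero_add]
      have : ∑ v ∈ A.erase (Fin.last n), (if v = Fin.last n then 0 else 1)
          = (A.erase (Fin.last n)).card := by
        rw [Finset.card_eq_sum_ones]
        exact Finset.sum_congr rfl fun v hv => if_neg (Finset.ne_of_mem_erase hv)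
      rw [this, if_pos hlast, Finset.card_erase_of_mem hlast]
      have : 1 ≤ A.card := Finset.card_pos.mpr ⟨_, hlast⟩
      push_cast [Finset.card_erase_of_mem hlast]
      omega
    · rw [if_neg hlast]
      have : ∑ v ∈ A, (if v = Fin.last n then 0 else 1) = A.card := by
        rw [Finset.card_eq_sum_ones]
        exact Finset.sum_congr rfl fun v hv => if_neg (fun h => hlast (by rw [← h]; exact hv))
      rw [this]; push_cast; ring

lemma coe_le_add_iff {a b : ℝ} {c : WithTop ℝ} :
    ((a : ℝ) : WithTop ℝ) ≤ c + ((b : ℝ) : WithTop ℝ) ↔ (((a - b : ℝ)) : WithTop ℝ) ≤ c := by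
  induction c
  · simp
  · rw [← WithTop.coe_add, WithTop.coe_le_coe, WithTop.coe_le_coe]
    constructor <;> intro <;> linarith

end L2Aux


open L2Aux in
/-- Polyhedral description of an L₂♮-convex polyhedron: there are bounds
`γ I J ∈ ℝ ∪ {+∞}` for disjoint `I J` with `|I| - |J| ∈ {-1,0,1}` such that
`P = {x : x(J) - x(I) ≤ γ I J for all such I, J}`. -/
theorem polyhedral_description_of_L2nat_convex_polyhedron {n : ℕ} (P : Set (Fin n → ℝ))
    (hP : IsL2NatConvexPoly P) :
    ∃ γ : Finset (Fin n) → Finset (Fin n) → WithTop ℝ,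
      P = {x : Fin n → ℝ | ∀ I J : Finset (Fin n), Disjoint I J →
        (I.card : ℤ) - (J.card : ℤ) ∈ ({-1, 0, 1} : Set ℤ) →
        (((∑ j ∈ J, x j) - ∑ i ∈ I, x i : ℝ) : WithTop ℝ) ≤ γ I J} := by
  classical
  obtain ⟨hpoly, P₁, P₂, h₁, h₂, hsum⟩ := hP
  obtain ⟨hpoly1, Q₁, hQ₁, hP₁⟩ := h₁
  obtain ⟨hpoly2, Q₂, hQ₂, hP₂⟩ := h₂
  -- the slice lemma
  have hslice : ∀ x : Fin n → ℝ, x ∈ P ↔ Fin.snoc x (0 : ℝ) ∈ Q₁ + Q₂ := by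
    intro x
    constructor
    · intro hx
      rw [hsum] at hx
      obtain ⟨x₁, hx₁, x₂, hx₂, hxe⟩ := Set.mem_add.mp hx
      have : (Fin.snoc x (0:ℝ) : Fin (n+1) → ℝ)
          = (Fin.snoc x₁ (0:ℝ) : Fin (n+1) → ℝ) + (Fin.snoc x₂ (0:ℝ) : Fin (n+1) → ℝ) := by
        funext v
        refine Fin.lastCases ?_ ?_ v
        · simp
        · intro i
          simp only [Pi.add_apply, Fin.snoc_castSucc]
          rw [← hxe]; rfl
      rw [this]
      rw [hP₁] at hx₁
      rw [hP₂] at hx₂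
      exact Set.add_mem_add hx₁ hx₂
    · intro hx
      obtain ⟨q₁, hq₁, q₂, hq₂, hqe⟩ := Set.mem_add.mp hx
      set μ := q₁ (Fin.last n) with hμ
      have hq₁' : (q₁ + fun _ => -μ) ∈ Q₁ := hQ₁.2.2.2 q₁ hq₁ (-μ)
      have hq₂' : (q₂ + fun _ => μ) ∈ Q₂ := hQ₂.2.2.2 q₂ hq₂ μ
      have hlast : q₁ (Fin.last n) + q₂ (Fin.last n) = 0 := by
        have := congrFun hqe (Fin.last n)
        simpa using this
      set x₁ : Fin n → ℝ := fun i => ((q₁ + fun _ => -μ : Fin (n+1) → ℝ)) (Fin.castSucc i)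
        with hx₁d
      set x₂ : Fin n → ℝ := fun i => ((q₂ + fun _ => μ : Fin (n+1) → ℝ)) (Fin.castSucc i)
        with hx₂d
      have hs₁ : (Fin.snoc x₁ (0:ℝ) : Fin (n+1) → ℝ) = (q₁ + fun _ => -μ) := by
        funext v
        refine Fin.lastCases ?_ ?_ v
        · simp [hμ]
        · intro i; simp [hx₁d]

      have hs₂ : (Fin.snoc x₂ (0:ℝ) : Fin (n+1) → ℝ) = (q₂ + fun _ => μ) := by
        funext v
        refine Fin.lastCases ?_ ?_ v
        · simp [hμ]; linarith
        · intro i; simp [hx₂d]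
      have hx12 : x = x₁ + x₂ := by
        funext i
        have h := congrFun hqe (Fin.castSucc i)
        simp only [Fin.snoc_castSucc, Pi.add_apply] at h
        show x i = x₁ i + x₂ i
        simp only [hx₁d, hx₂d, Pi.add_apply]
        rw [← h]; ring
      rw [hsum, hx12]
      exact Set.add_mem_add
        (by rw [hP₁]; show (Fin.snoc x₁ (0:ℝ) : Fin (n+1) → ℝ) ∈ Q₁; rw [hs₁]; exact hq₁')
        (by rw [hP₂]; show (Fin.snoc x₂ (0:ℝ) : Fin (n+1) → ℝ) ∈ Q₂; rw [hs₂]; exact hq₂')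
  -- difference-bound descriptions
  have hd1 := lconvex_eq_diff hQ₁
  have hd2 := lconvex_eq_diff hQ₂
  -- the weight system
  set W : (Fin (n+1) → ℝ) → Fin (n+1) → Fin (n+1) → WithTop ℝ :=
    fun z i j => min (dg Q₁ i j) (dg Q₂ j i + ((z j - z i : ℝ) : WithTop ℝ)) with hW
  have hmem : ∀ z : Fin (n+1) → ℝ,
      z ∈ Q₁ + Q₂ ↔ ∃ u : Fin (n+1) → ℝ, ∀ i j, ((u j - u i : ℝ) : WithTop ℝ) ≤ W z i j := by
    intro z
    constructor
    · rintro hz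
      obtain ⟨q₁, hq₁, q₂, hq₂, hqe⟩ := Set.mem_add.mp hz
      refine ⟨q₁, fun i j => le_min ?_ ?_⟩
      · have := (hd1 ▸ hq₁) i j
        exact this
      · have h2 : ((q₂ i - q₂ j : ℝ) : WithTop ℝ) ≤ dg Q₂ j i := (hd2 ▸ hq₂) j i
        have he : (q₁ j - q₁ i : ℝ) = (q₂ i - q₂ j) + (z j - z i) := by
          have hj := congrFun hqe j
          have hi := congrFun hqe i
          simp only [Pi.add_apply] at hj hi
          rw [← hj, ← hi]; ring
        rw [he, WithTop.coe_add]
        exact add_le_add h2 le_rfl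
    · rintro ⟨u, hu⟩
      have hu1 : u ∈ Q₁ := by
        rw [hd1]
        exact fun i j => le_trans (hu i j) (min_le_left _ _)
      have hu2 : (fun v => z v - u v) ∈ Q₂ := by
        rw [hd2]
        intro i j
        have h1 : ((u i - u j : ℝ) : WithTop ℝ) ≤ dg Q₂ i j + ((z i - z j : ℝ) : WithTop ℝ) :=
          le_trans (hu j i) (min_le_right _ _)
        have h2 := coe_le_add_iff.mp h1
        have he : (z j - u j) - (z i - u i) = (u i - u j) - (z i - z j) := by ring
        rw [he]
        exact h2
      refine Set.mem_add.mpr ⟨u, hu1, fun v => z v - u v, hu2, ?_⟩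
      funext v; simp
  -- nonemptiness of P
  have hPne : P.Nonempty := by
    obtain ⟨q₁, hq₁⟩ := hQ₁.2.1
    obtain ⟨q₂, hq₂⟩ := hQ₂.2.1
    have h1 : (q₁ + fun _ => -q₁ (Fin.last n)) ∈ Q₁ := hQ₁.2.2.2 q₁ hq₁ _
    have h2 : (q₂ + fun _ => -q₂ (Fin.last n)) ∈ Q₂ := hQ₂.2.2.2 q₂ hq₂ _
    set z : Fin (n+1) → ℝ := (q₁ + fun _ => -q₁ (Fin.last n)) + (q₂ + fun _ => -q₂ (Fin.last n))
      with hz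
    set x : Fin n → ℝ := fun i => z (Fin.castSucc i) with hx
    have hzx : (Fin.snoc x (0:ℝ) : Fin (n+1) → ℝ) = z := by
      funext v
      refine Fin.lastCases ?_ ?_ v
      · simp [hz, Fin.snoc_last]; try ring
      · intro i; simp [hx]
    refine ⟨x, (hslice x).mpr ?_⟩
    rw [hzx]
    exact Set.add_mem_add h1 h2
  -- the bound function
  set γ : Finset (Fin n) → Finset (Fin n) → WithTop ℝ :=
    fun I J => mysup {r | ∃ x' ∈ P, r = (∑ j ∈ J, x' j) - ∑ i ∈ I, x' i} with hγ
  refine ⟨γ, ?_⟩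
  apply Set.Subset.antisymm
  · intro x hx I J _ _
    exact le_mysup ⟨x, hx, rfl⟩
  · intro x hx
    simp only [Set.mem_setOf_eq] at hx
    set y : Fin (n+1) → ℝ := (Fin.snoc x (0:ℝ) : Fin (n+1) → ℝ) with hy
    rw [hslice x, hmem y]
    apply feasible_of_cycles_nonneg (m := n) (W y)
    intro a l hnd
    by_contra hneg
    push_neg at hneg
    -- extract the choice sequence
    set L : List (Fin (n+1)) := a :: (l ++ [a]) with hL
    obtain ⟨cs, hcslen, hcs⟩ := exists_pwc (dg Q₁)
      (fun i j => dg Q₂ j i + ((y j - y i : ℝ) : WithTop ℝ)) L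
    have hpwc_lt : pwc (dg Q₁) (fun i j => dg Q₂ j i + ((y j - y i : ℝ) : WithTop ℝ)) cs L < 0 := by
      rw [hcs]
      exact hneg
    have hnetop : pwc (dg Q₁) (fun i j => dg Q₂ j i + ((y j - y i : ℝ) : WithTop ℝ)) cs L ≠ ⊤ :=
      ne_top_of_lt hpwc_lt
    obtain ⟨β, hβ⟩ := WithTop.ne_top_iff_exists.mp hnetop
    have hβneg : β < 0 := by
      rw [← hβ] at hpwc_lt
      exact_mod_cast hpwc_lt
    -- the finsets
    obtain ⟨Hf, Tf, hdisj0, hcard0, hSs⟩ := decomp cs a l hnd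
    obtain ⟨If, hIsum, hIcard, hImem⟩ := downshift Hf
    obtain ⟨Jf, hJsum, hJcard, hJmem⟩ := downshift Tf
    have hdisj : Disjoint If Jf := Finset.disjoint_left.mpr
      (fun j hj hj2 => (Finset.disjoint_left.mp hdisj0) ((hImem j).mp hj) ((hJmem j).mp hj2))
    have hcards : (If.card : ℤ) - (Jf.card : ℤ) ∈ ({-1, 0, 1} : Set ℤ) := by
      rw [hIcard, hJcard]
      have hnotboth : ¬ (Fin.last n ∈ Hf ∧ Fin.last n ∈ Tf) := fun hb =>
        (Finset.disjoint_left.mp hdisj0 hb.1 hb.2).elim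
      by_cases hH : Fin.last n ∈ Hf <;> by_cases hT : Fin.last n ∈ Tf
      · exact absurd ⟨hH, hT⟩ hnotboth
      · rw [if_pos hH, if_neg hT]
        simp only [Set.mem_insert_iff, Set.mem_singleton_iff]
        omega
      · rw [if_neg hH, if_pos hT]
        simp only [Set.mem_insert_iff, Set.mem_singleton_iff]
        omega
      · rw [if_neg hH, if_neg hT]
        simp only [Set.mem_insert_iff, Set.mem_singleton_iff]
        omega
    have hylast : y (Fin.last n) = 0 := by simp [hy]
    have hyc : ∀ j : Fin n, y (Fin.castSucc j) = x j := by intro j; simp [hy]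
    have hSx : Ssum y cs L = (∑ i ∈ If, x i) - (∑ j ∈ Jf, x j) := by
      rw [hSs y, ← hIsum y hylast, ← hJsum y hylast]
      rw [Finset.sum_congr rfl (fun j _ => hyc j), Finset.sum_congr rfl (fun j _ => hyc j)]
    have hbound : ∀ x' ∈ P, (∑ j ∈ Jf, x' j) - ∑ i ∈ If, x' i
        ≤ β + ((∑ j ∈ Jf, x j) - ∑ i ∈ If, x i) := by
      intro x' hx'
      set y' : Fin (n+1) → ℝ := (Fin.snoc x' (0:ℝ) : Fin (n+1) → ℝ) with hy'
      obtain ⟨u, hu⟩ := (hmem y').mp ((hslice x').mp hx')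
      have h0 : (0 : WithTop ℝ) ≤ pw (W y') L := solution_cw hu a l
      have h1 : pw (W y') L
          ≤ pwc (dg Q₁) (fun i j => dg Q₂ j i + ((y' j - y' i : ℝ) : WithTop ℝ)) cs L :=
        pw_min_le_pwc _ _ cs L hcslen
      have h2 := pwc_shift (dg Q₂) y y' cs L (dg Q₁)
      rw [← hβ] at h2
      have h3 : (0 : WithTop ℝ)
          ≤ ((β + (Ssum y' cs L - Ssum y cs L) : ℝ) : WithTop ℝ) := by
        rw [WithTop.coe_add]
        exact le_trans h0 (le_trans h1 (le_of_eq h2))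
      have h4 : (0 : ℝ) ≤ β + (Ssum y' cs L - Ssum y cs L) := by exact_mod_cast h3
      have hy'last : y' (Fin.last n) = 0 := by simp [hy']
      have hy'c : ∀ j : Fin n, y' (Fin.castSucc j) = x' j := by intro j; simp [hy']
      have hSx' : Ssum y' cs L = (∑ i ∈ If, x' i) - (∑ j ∈ Jf, x' j) := by
        rw [hSs y', ← hIsum y' hy'last, ← hJsum y' hy'last]
        rw [Finset.sum_congr rfl (fun j _ => hy'c j), Finset.sum_congr rfl (fun j _ => hy'c j)]
      rw [hSx', hSx] at h4
      linarith
    have hγle : γ If Jf ≤ ((β + ((∑ j ∈ Jf, x j) - ∑ i ∈ If, x i) : ℝ) : WithTop ℝ) := by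
      refine mysup_le ?_ ?_
      · obtain ⟨x0, hx0⟩ := hPne
        exact ⟨_, x0, hx0, rfl⟩
      · rintro r ⟨x', hx', rfl⟩
        exact hbound x' hx'
    have hcon := hx If Jf hdisj hcards
    have hfin : ((∑ j ∈ Jf, x j) - ∑ i ∈ If, x i : ℝ)
        ≤ β + ((∑ j ∈ Jf, x j) - ∑ i ∈ If, x i) := by
      exact_mod_cast le_trans hcon hγle
    linarith
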